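/- Let ω be a radial weight in D̂ (so ω̂(r) ≤ C ω̂((1+r)/2) for some C > 1). Then there exist constants C' > 0 and η > 0 such that the moments satisfy ω_x ≤ C' (y/x)^η ω_y for all 0 < x ≤ y < ∞. -/

import Mathlib

open MeasureTheory

/-- The tail integral of a radial weight. -/
noncomputable def hat (ω : ℝ → ℝ) (r : ℝ) : ℝ := ∫ s in r..1, ω s

/-- The x-th moment of a radial weight. -/
noncomputable def moment (ω : ℝ → ℝ) (x : ℝ) : ℝ := ∫ r in (0:ℝ)..1, r ^ x * ω r

namespace DhatAux


noncomputable def t (n : ℕ) : ℝ := 1 - (2:ℝ)⁻¹ ^ n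

lemma t_zero : t 0 = 0 := by simp [t]

lemma t_lt_one (n : ℕ) : t n < 1 := by
  have : (0:ℝ) < (2:ℝ)⁻¹ ^ n := by positivity
  simp only [t]; linarith

lemma t_nonneg (n : ℕ) : 0 ≤ t n := by
  have : (2:ℝ)⁻¹ ^ n ≤ 1 := pow_le_one₀ (by norm_num) (by norm_num)
  simp only [t]; linarith

lemma t_le_one (n : ℕ) : t n ≤ 1 := (t_lt_one n).le

lemma t_succ (n : ℕ) : (1 + t n) / 2 = t (n + 1) := by
  simp only [t, pow_succ]; ring

lemma t_mono {n m : ℕ} (h : n ≤ m) : t n ≤ t m := by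
  have := pow_le_pow_of_le_one (by norm_num : (0:ℝ) ≤ 2⁻¹) (by norm_num) h
  simp only [t]; linarith

lemma one_half_le_t {m : ℕ} (hm : 1 ≤ m) : 2⁻¹ ≤ t m := by
  have h := t_mono hm
  have : t 1 = 2⁻¹ := by norm_num [t]
  linarith

lemma t_pos {m : ℕ} (hm : 1 ≤ m) : 0 < t m := lt_of_lt_of_le (by norm_num) (one_half_le_t hm)

-- nat arithmetic facts
lemma nat_quad_le_pow (j : ℕ) : j * (j + 1) ≤ 2 ^ (j + 1) := by
  induction j with
  | zero => simp
  | succ j ih =>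
    rcases Nat.lt_or_ge j 2 with hj | hj
    · interval_cases j <;> decide
    · have h1 : (j + 1) * (j + 1 + 1) ≤ 2 * (j * (j + 1)) := by nlinarith
      calc (j + 1) * (j + 1 + 1) ≤ 2 * (j * (j + 1)) := h1
        _ ≤ 2 * 2 ^ (j + 1) := by omega
        _ = 2 ^ (j + 1 + 1) := by ring

lemma nat_lt_two_pow (j : ℕ) : j < 2 ^ j := Nat.lt_two_pow_self

lemma series_bound {C : ℝ} (hC : 1 < C) {K0 : ℕ} (hK0 : 2 * Real.log C + 2 ≤ K0) (j : ℕ) :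
    Real.exp (-(2 ^ j)) * C ^ (j + 1) ≤ C ^ K0 * Real.exp (-(1/2)) ^ (j + 1) := by
  have hC0 : (0:ℝ) < C := lt_trans one_pos hC
  set L := Real.log C with hL
  have hL0 : 0 < L := Real.log_pos hC
  have hCe : C = Real.exp L := (Real.exp_log hC0).symm
  rw [hCe]
  simp only [← Real.exp_nat_mul, ← Real.exp_add, Real.exp_le_exp]
  push_cast
  -- goal : -(2^j) + (j+1)*L ≤ K0*L + (j+1)*(-(1/2))
  have hpow : ((j:ℝ) * ((j:ℝ) + 1)) / 2 ≤ 2 ^ j := by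
    have := nat_quad_le_pow j
    have h2 : ((j * (j+1) : ℕ) : ℝ) ≤ ((2 ^ (j+1) : ℕ) : ℝ) := by exact_mod_cast this
    push_cast at h2
    rw [pow_succ] at h2
    linarith
  have hjp : ((j:ℝ) + 1) ≤ 2 * 2 ^ j := by
    have := Nat.lt_two_pow_self (n := j + 1)
    have h2 : ((j + 1 : ℕ) : ℝ) ≤ ((2 ^ (j+1) : ℕ) : ℝ) := by exact_mod_cast this.le
    push_cast at h2
    rw [pow_succ] at h2
    linarith
  have hK00 : (0:ℝ) ≤ (K0:ℝ) := Nat.cast_nonneg _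
  rcases le_or_gt ((j:ℝ) + 1) K0 with hcase | hcase
  · have h1 : ((j:ℝ) + 1) * L ≤ (K0:ℝ) * L := by nlinarith
    linarith
  · have hjK : (K0:ℝ) ≤ j := by
      have h' : K0 < j + 1 := by exact_mod_cast hcase
      exact_mod_cast Nat.lt_succ_iff.mp h'
    have hjL : 2 * L + 2 ≤ (j:ℝ) := le_trans hK0 hjK
    nlinarith [mul_nonneg (sub_nonneg.mpr hjL) (by positivity : (0:ℝ) ≤ (j:ℝ) + 1),
      mul_nonneg hL0.le hK00]

/-- Geometric tail bound: `∑_{n<m} exp(-1/2)^(m-n) ≤ 2`. -/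
lemma geom_tail (m : ℕ) : (∑ n ∈ Finset.range m, Real.exp (-(1/2)) ^ (m - n)) ≤ 2 := by
  set q : ℝ := Real.exp (-(1/2)) with hq
  have hq0 : 0 < q := Real.exp_pos _
  have hq23 : q ≤ 2/3 := by
    have h1 : (1:ℝ) + 1/2 ≤ Real.exp (1/2) := by
      have := Real.add_one_le_exp (1/2 : ℝ); linarith
    have h2 : q * Real.exp (1/2) = 1 := by
      rw [hq, ← Real.exp_add]; norm_num
    nlinarith
  have hq1 : q < 1 := lt_of_le_of_lt hq23 (by norm_num)
  have hreflect : (∑ n ∈ Finset.range m, q ^ (m - n)) = ∑ n ∈ Finset.range m, q ^ (n + 1) := by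
    rw [← Finset.sum_range_reflect (fun j => q ^ (j + 1)) m]
    refine Finset.sum_congr rfl fun n hn => ?_
    have hn' : n < m := Finset.mem_range.mp hn
    congr 1
    omega
  rw [hreflect]
  have : (∑ n ∈ Finset.range m, q ^ (n + 1)) = q * ∑ n ∈ Finset.range m, q ^ n := by
    rw [Finset.mul_sum]
    exact Finset.sum_congr rfl fun n _ => by ring
  rw [this]
  have hgeom : (∑ n ∈ Finset.range m, q ^ n) ≤ 1 / (1 - q) := by
    rw [geom_sum_eq hq1.ne m]
    have h1 : (0:ℝ) < 1 - q := by linarith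
    have heq : (q ^ m - 1) / (q - 1) = (1 - q ^ m) / (1 - q) := by
      rw [div_eq_div_iff (by linarith) (by linarith)]; ring
    rw [heq, div_le_div_iff₀ h1 h1]
    nlinarith [pow_nonneg hq0.le m]
  calc q * ∑ n ∈ Finset.range m, q ^ n ≤ q * (1 / (1 - q)) := by
        apply mul_le_mul_of_nonneg_left hgeom hq0.le
    _ ≤ 2 := by
        rw [mul_one_div, div_le_iff₀ (by linarith : (0:ℝ) < 1 - q)]
        linarith

variable {ν : ℝ → ℝ}

lemma νint (hνi : IntervalIntegrable ν volume 0 1) {a b : ℝ} (ha : 0 ≤ a) (ha1 : a ≤ 1)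
    (hb : 0 ≤ b) (hb1 : b ≤ 1) : IntervalIntegrable ν volume a b :=
  hνi.mono_set (Set.uIcc_subset_uIcc
    (by rw [Set.uIcc_of_le zero_le_one]; exact Set.mem_Icc.mpr ⟨ha, ha1⟩)
    (by rw [Set.uIcc_of_le zero_le_one]; exact Set.mem_Icc.mpr ⟨hb, hb1⟩))

lemma momint (hνi : IntervalIntegrable ν volume 0 1) {x : ℝ} (hx : 0 < x) {a b : ℝ}
    (ha : 0 ≤ a) (ha1 : a ≤ 1) (hb : 0 ≤ b) (hb1 : b ≤ 1) :
    IntervalIntegrable (fun r => r ^ x * ν r) volume a b := by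
  have hc : Continuous fun r : ℝ => r ^ x :=
    continuous_iff_continuousAt.mpr fun r => Real.continuousAt_rpow_const r x (Or.inr hx.le)
  exact (hνi.continuousOn_mul hc.continuousOn).mono_set (Set.uIcc_subset_uIcc
    (by rw [Set.uIcc_of_le zero_le_one]; exact Set.mem_Icc.mpr ⟨ha, ha1⟩)
    (by rw [Set.uIcc_of_le zero_le_one]; exact Set.mem_Icc.mpr ⟨hb, hb1⟩))

lemma hat_nonneg (hν0 : ∀ r, 0 ≤ ν r) {a : ℝ} (ha1 : a ≤ 1) : 0 ≤ hat ν a :=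
  intervalIntegral.integral_nonneg ha1 fun u _ => hν0 u

lemma hat_split (hνi : IntervalIntegrable ν volume 0 1) {a b : ℝ} (ha : 0 ≤ a) (hab : a ≤ b)
    (hb1 : b ≤ 1) : hat ν a = (∫ r in a..b, ν r) + hat ν b :=
  (intervalIntegral.integral_add_adjacent_intervals
    (νint hνi ha (le_trans hab hb1) (le_trans ha hab) hb1)
    (νint hνi (le_trans ha hab) hb1 zero_le_one le_rfl)).symm

lemma int_le_hat (hν0 : ∀ r, 0 ≤ ν r) (hνi : IntervalIntegrable ν volume 0 1) {a b : ℝ}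
    (ha : 0 ≤ a) (hab : a ≤ b) (hb1 : b ≤ 1) : (∫ r in a..b, ν r) ≤ hat ν a := by
  rw [hat_split hνi ha hab hb1]
  have := hat_nonneg hν0 (ν := ν) hb1
  linarith


/-- Iterated doubling. -/
lemma hatA {C : ℝ} (hC : 1 < C)
    (hd : ∀ r ∈ Set.Ico (0:ℝ) 1, hat ν r ≤ C * hat ν ((1 + r) / 2)) :
    ∀ k n : ℕ, hat ν (t n) ≤ C ^ k * hat ν (t (n + k)) := by
  intro k
  induction k with
  | zero => intro n; simp
  | succ k ih =>
    intro n
    have h1 := ih n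
    have h2 : hat ν (t (n + k)) ≤ C * hat ν (t (n + k + 1)) := by
      have := hd (t (n + k)) (Set.mem_Ico.mpr ⟨t_nonneg _, t_lt_one _⟩)
      rwa [t_succ (n + k)] at this
    calc hat ν (t n) ≤ C ^ k * hat ν (t (n + k)) := h1
      _ ≤ C ^ k * (C * hat ν (t (n + k + 1))) := by
          apply mul_le_mul_of_nonneg_left h2 (by positivity)
      _ = C ^ (k + 1) * hat ν (t (n + (k + 1))) := by ring_nf

/-- Trivial upper bound: moment ≤ hat ν 0. -/
lemma upper0 (hν0 : ∀ r, 0 ≤ ν r) (hνi : IntervalIntegrable ν volume 0 1) {x : ℝ}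
    (hx : 0 < x) : moment ν x ≤ hat ν 0 := by
  have : moment ν x ≤ ∫ r in (0:ℝ)..1, ν r := by
    apply intervalIntegral.integral_mono_on zero_le_one
      (momint hνi hx le_rfl zero_le_one zero_le_one le_rfl)
      (νint hνi le_rfl zero_le_one zero_le_one le_rfl)
    intro r hr
    rcases Set.mem_Icc.mp hr with ⟨hr0, hr1⟩
    have : r ^ x ≤ 1 := Real.rpow_le_one hr0 hr1 hx.le
    exact mul_le_of_le_one_left (hν0 r) this
  exact this

/-- Dyadic upper bound for the moment. -/
lemma upper {C : ℝ} (hC : 1 < C) (hν0 : ∀ r, 0 ≤ ν r) (hνi : IntervalIntegrable ν volume 0 1)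
    (hd : ∀ r ∈ Set.Ico (0:ℝ) 1, hat ν r ≤ C * hat ν ((1 + r) / 2))
    {K0 : ℕ} (hK0 : 2 * Real.log C + 2 ≤ K0)
    {x : ℝ} {m : ℕ} (hxm : (2:ℝ) ^ m ≤ x) :
    moment ν x ≤ (2 * C ^ K0 + 1) * hat ν (t m) := by
  have hx : 0 < x := lt_of_lt_of_le (by positivity) hxm
  have hC0 : (0:ℝ) < C := lt_trans one_pos hC
  have hH : 0 ≤ hat ν (t m) := hat_nonneg hν0 (t_le_one m)
  set q : ℝ := Real.exp (-(1/2)) with hqdef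
  -- split the moment
  have hsum : (∑ n ∈ Finset.range m, ∫ r in (t n)..(t (n+1)), r ^ x * ν r)
      = ∫ r in (t 0)..(t m), r ^ x * ν r :=
    intervalIntegral.sum_integral_adjacent_intervals fun k _ =>
      momint hνi hx (t_nonneg k) (t_le_one k) (t_nonneg (k+1)) (t_le_one (k+1))
  have hsplit : moment ν x = (∫ r in (0:ℝ)..(t m), r ^ x * ν r)
      + ∫ r in (t m)..1, r ^ x * ν r :=
    (intervalIntegral.integral_add_adjacent_intervals
      (momint hνi hx le_rfl zero_le_one (t_nonneg m) (t_le_one m))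
      (momint hνi hx (t_nonneg m) (t_le_one m) zero_le_one le_rfl)).symm
  -- bound the tail piece
  have htail : (∫ r in (t m)..1, r ^ x * ν r) ≤ hat ν (t m) := by
    have h1 : (∫ r in (t m)..1, r ^ x * ν r) ≤ ∫ r in (t m)..1, ν r := by
      apply intervalIntegral.integral_mono_on (t_le_one m)
        (momint hνi hx (t_nonneg m) (t_le_one m) zero_le_one le_rfl)
        (νint hνi (t_nonneg m) (t_le_one m) zero_le_one le_rfl)
      intro r hr
      rcases Set.mem_Icc.mp hr with ⟨hr0, hr1⟩
      have hr0' : 0 ≤ r := le_trans (t_nonneg m) hr0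
      exact mul_le_of_le_one_left (hν0 r) (Real.rpow_le_one hr0' hr1 hx.le)
    exact h1
  -- bound each dyadic piece
  have hpiece : ∀ n ∈ Finset.range m, (∫ r in (t n)..(t (n+1)), r ^ x * ν r)
      ≤ C ^ K0 * q ^ (m - n) * hat ν (t m) := by
    intro n hn
    have hnm : n < m := Finset.mem_range.mp hn
    obtain ⟨j, hj⟩ : ∃ j, m = n + 1 + j := ⟨m - (n+1), by omega⟩
    have hmn : m - n = j + 1 := by omega
    -- step 1 : piece ≤ t(n+1)^x * hat ν (t n)
    have hstep1 : (∫ r in (t n)..(t (n+1)), r ^ x * ν r)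
        ≤ t (n+1) ^ x * hat ν (t n) := by
      have h1 : (∫ r in (t n)..(t (n+1)), r ^ x * ν r)
          ≤ ∫ r in (t n)..(t (n+1)), t (n+1) ^ x * ν r := by
        apply intervalIntegral.integral_mono_on (t_mono (Nat.le_succ n))
          (momint hνi hx (t_nonneg n) (t_le_one n) (t_nonneg (n+1)) (t_le_one (n+1)))
          ((νint hνi (t_nonneg n) (t_le_one n) (t_nonneg (n+1)) (t_le_one (n+1))).const_mul _)
        intro r hr
        rcases Set.mem_Icc.mp hr with ⟨hr0, hr1⟩
        have hr0' : 0 ≤ r := le_trans (t_nonneg n) hr0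
        exact mul_le_mul_of_nonneg_right (Real.rpow_le_rpow hr0' hr1 hx.le) (hν0 r)
      rw [intervalIntegral.integral_const_mul] at h1
      calc (∫ r in (t n)..(t (n+1)), r ^ x * ν r)
          ≤ t (n+1) ^ x * ∫ r in (t n)..(t (n+1)), ν r := h1
        _ ≤ t (n+1) ^ x * hat ν (t n) := by
            apply mul_le_mul_of_nonneg_left
              (int_le_hat hν0 hνi (t_nonneg n) (t_mono (Nat.le_succ n)) (t_le_one (n+1)))
              (Real.rpow_nonneg (t_nonneg (n+1)) x)
    -- step 2 : t(n+1)^x ≤ exp(-(2^j))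
    have hstep2 : t (n+1) ^ x ≤ Real.exp (-(2 ^ j)) := by
      have hu : t (n+1) ≤ Real.exp (-((2:ℝ)⁻¹ ^ (n+1))) := by
        have := Real.add_one_le_exp (-((2:ℝ)⁻¹ ^ (n+1)))
        simp only [t]
        linarith
      have h2 : t (n+1) ^ x ≤ Real.exp (-((2:ℝ)⁻¹ ^ (n+1))) ^ x :=
        Real.rpow_le_rpow (t_nonneg (n+1)) hu hx.le
      have h3 : Real.exp (-((2:ℝ)⁻¹ ^ (n+1))) ^ x
          = Real.exp (-((2:ℝ)⁻¹ ^ (n+1)) * x) := (Real.exp_mul _ x).symm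
      rw [h3] at h2
      apply le_trans h2
      apply Real.exp_le_exp.mpr
      -- -(2⁻¹^(n+1)) * x ≤ -(2^j)
      have hxj : (2:ℝ) ^ j ≤ (2:ℝ)⁻¹ ^ (n+1) * x := by
        have h4 : (2:ℝ)⁻¹ ^ (n+1) * (2:ℝ) ^ m = 2 ^ j := by
          rw [hj]
          rw [inv_pow, pow_add]
          field_simp
          ring
        calc (2:ℝ) ^ j = (2:ℝ)⁻¹ ^ (n+1) * (2:ℝ) ^ m := h4.symm
          _ ≤ (2:ℝ)⁻¹ ^ (n+1) * x := by
              apply mul_le_mul_of_nonneg_left hxm (by positivity)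
      nlinarith
    -- step 3 : hat ν (t n) ≤ C^(j+1) * hat ν (t m)
    have hstep3 : hat ν (t n) ≤ C ^ (j+1) * hat ν (t m) := by
      have := hatA hC hd (j+1) n
      have hidx : n + (j + 1) = m := by omega
      rwa [hidx] at this
    -- combine
    calc (∫ r in (t n)..(t (n+1)), r ^ x * ν r)
        ≤ t (n+1) ^ x * hat ν (t n) := hstep1
      _ ≤ t (n+1) ^ x * (C ^ (j+1) * hat ν (t m)) := by
          apply mul_le_mul_of_nonneg_left hstep3 (Real.rpow_nonneg (t_nonneg (n+1)) x)
      _ = (t (n+1) ^ x * C ^ (j+1)) * hat ν (t m) := by ring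
      _ ≤ (Real.exp (-(2 ^ j)) * C ^ (j+1)) * hat ν (t m) := by
          apply mul_le_mul_of_nonneg_right _ hH
          apply mul_le_mul_of_nonneg_right hstep2 (by positivity)
      _ ≤ (C ^ K0 * q ^ (j+1)) * hat ν (t m) := by
          apply mul_le_mul_of_nonneg_right (series_bound hC hK0 j) hH
      _ = C ^ K0 * q ^ (m - n) * hat ν (t m) := by rw [hmn]
  -- sum the pieces
  have hsumle : (∫ r in (0:ℝ)..(t m), r ^ x * ν r) ≤ 2 * C ^ K0 * hat ν (t m) := by
    rw [← t_zero, ← hsum]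
    calc (∑ n ∈ Finset.range m, ∫ r in (t n)..(t (n+1)), r ^ x * ν r)
        ≤ ∑ n ∈ Finset.range m, C ^ K0 * q ^ (m - n) * hat ν (t m) :=
          Finset.sum_le_sum hpiece
      _ = C ^ K0 * hat ν (t m) * ∑ n ∈ Finset.range m, q ^ (m - n) := by
          rw [Finset.mul_sum]
          exact Finset.sum_congr rfl fun n _ => by ring
      _ ≤ C ^ K0 * hat ν (t m) * 2 := by
          apply mul_le_mul_of_nonneg_left (geom_tail m) (by positivity)
      _ = 2 * C ^ K0 * hat ν (t m) := by ring
  rw [hsplit]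
  calc (∫ r in (0:ℝ)..(t m), r ^ x * ν r) + ∫ r in (t m)..1, r ^ x * ν r
      ≤ 2 * C ^ K0 * hat ν (t m) + hat ν (t m) := add_le_add hsumle htail
    _ = (2 * C ^ K0 + 1) * hat ν (t m) := by ring

/-- Lower bound for the moment in terms of the tail. -/
lemma lower (hν0 : ∀ r, 0 ≤ ν r) (hνi : IntervalIntegrable ν volume 0 1)
    {y : ℝ} {M : ℕ} (hM : 1 ≤ M) (hy : 0 < y) (hyM : y ≤ (2:ℝ) ^ M) :
    hat ν (t M) ≤ 8 * moment ν y := by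
  set N : ℕ := 2 ^ M with hN
  have hN2 : 2 ≤ N := by
    have : 2 ^ 1 ≤ 2 ^ M := Nat.pow_le_pow_right (by norm_num) hM
    simpa using this
  have hN0 : (0:ℝ) < N := by positivity
  have htM : t M = 1 - 1 / (N:ℝ) := by
    simp only [t, hN, inv_pow]
    push_cast
    rw [one_div]
  have htMpos : 0 < t M := t_pos hM
  -- (t M)^(2^M) ≥ exp (-2) ≥ 1/8
  have hexp : Real.exp (-(2 / (N:ℝ))) ≤ t M := by
    rw [htM]
    have hu1 : 2 / (N:ℝ) ≤ 1 := by
      rw [div_le_one hN0]; exact_mod_cast hN2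
    have hu0 : 0 < 2 / (N:ℝ) := by positivity
    have he : Real.exp (2 / (N:ℝ)) ≥ 1 + 2 / (N:ℝ) := by
      have := Real.add_one_le_exp (2 / (N:ℝ)); linarith
    have hinv : Real.exp (-(2 / (N:ℝ))) * Real.exp (2 / (N:ℝ)) = 1 := by
      rw [← Real.exp_add]; simp
    have hepos : 0 < Real.exp (-(2 / (N:ℝ))) := Real.exp_pos _
    have hE1 : Real.exp (-(2 / (N:ℝ))) * (1 + 2 / (N:ℝ)) ≤ 1 := by
      calc Real.exp (-(2 / (N:ℝ))) * (1 + 2 / (N:ℝ))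
          ≤ Real.exp (-(2 / (N:ℝ))) * Real.exp (2 / (N:ℝ)) :=
            mul_le_mul_of_nonneg_left he hepos.le
        _ = 1 := hinv
    have hv : 2 / (N:ℝ) = 2 * (1 / (N:ℝ)) := by ring
    nlinarith [hE1, hu0, hu1, hepos, hv]
  have hkey : (1:ℝ)/8 ≤ t M ^ (N:ℕ) := by
    have h1 : Real.exp (-(2 / (N:ℝ))) ^ (N:ℕ) ≤ t M ^ (N:ℕ) :=
      pow_le_pow_left₀ (Real.exp_pos _).le hexp N
    have h2 : Real.exp (-(2 / (N:ℝ))) ^ (N:ℕ) = Real.exp (-2) := by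
      rw [← Real.exp_nat_mul]
      congr 1
      have hNne : (N:ℝ) ≠ 0 := hN0.ne'
      field_simp
    rw [h2] at h1
    have h3 : Real.exp (2:ℝ) < 8 := by
      have he1 : Real.exp 1 < 2.7182818286 := Real.exp_one_lt_d9
      have he1' : 0 < Real.exp 1 := Real.exp_pos 1
      have : Real.exp 2 = Real.exp 1 * Real.exp 1 := by
        rw [← Real.exp_add]; norm_num
      nlinarith
    have h4 : (1:ℝ)/8 ≤ Real.exp (-2) := by
      rw [Real.exp_neg]
      rw [div_le_iff₀ (by norm_num : (0:ℝ) < 8)]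
      rw [inv_mul_eq_div, le_div_iff₀ (Real.exp_pos 2)]
      linarith
    linarith
  -- pointwise bound on [t M, 1]
  have hpt : ∀ r ∈ Set.Icc (t M) 1, (1:ℝ)/8 * ν r ≤ r ^ y * ν r := by
    intro r hr
    rcases Set.mem_Icc.mp hr with ⟨hr0, hr1⟩
    have hry : t M ^ y ≤ r ^ y := Real.rpow_le_rpow (t_nonneg M) hr0 hy.le
    have hty : t M ^ ((N:ℕ):ℝ) ≤ t M ^ y := by
      apply Real.rpow_le_rpow_of_exponent_ge htMpos (t_le_one M)
      rw [hN]
      push_cast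
      exact hyM
    rw [Real.rpow_natCast] at hty
    have : (1:ℝ)/8 ≤ r ^ y := le_trans hkey (le_trans hty hry)
    exact mul_le_mul_of_nonneg_right this (hν0 r)
  -- integrate
  have hint1 : (1:ℝ)/8 * hat ν (t M) ≤ ∫ r in (t M)..1, r ^ y * ν r := by
    have h1 : (∫ r in (t M)..1, (1:ℝ)/8 * ν r) ≤ ∫ r in (t M)..1, r ^ y * ν r :=
      intervalIntegral.integral_mono_on (t_le_one M)
        ((νint hνi (t_nonneg M) (t_le_one M) zero_le_one le_rfl).const_mul _)
        (momint hνi hy (t_nonneg M) (t_le_one M) zero_le_one le_rfl) hpt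
    rwa [intervalIntegral.integral_const_mul] at h1
  have hint2 : (∫ r in (t M)..1, r ^ y * ν r) ≤ moment ν y := by
    have hsplit : moment ν y = (∫ r in (0:ℝ)..(t M), r ^ y * ν r)
        + ∫ r in (t M)..1, r ^ y * ν r :=
      (intervalIntegral.integral_add_adjacent_intervals
        (momint hνi hy le_rfl zero_le_one (t_nonneg M) (t_le_one M))
        (momint hνi hy (t_nonneg M) (t_le_one M) zero_le_one le_rfl)).symm
    have hpos : 0 ≤ ∫ r in (0:ℝ)..(t M), r ^ y * ν r := by
      apply intervalIntegral.integral_nonneg (t_nonneg M)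
      intro u hu
      exact mul_nonneg (Real.rpow_nonneg (Set.mem_Icc.mp hu).1 y) (hν0 u)
    linarith
  linarith

/-- Moments are nonnegative. -/
lemma moment_nonneg (hν0 : ∀ r, 0 ≤ ν r) {y : ℝ} : 0 ≤ moment ν y := by
  apply intervalIntegral.integral_nonneg zero_le_one
  intro u hu
  exact mul_nonneg (Real.rpow_nonneg (Set.mem_Icc.mp hu).1 y) (hν0 u)

end DhatAux

open DhatAux in
theorem Dhat_implies_moment_bound (ω : ℝ → ℝ)
    (hω_nonneg : ∀ r ∈ Set.Ico (0:ℝ) 1, 0 ≤ ω r)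
    (hω_int : IntervalIntegrable ω volume 0 1)
    (hω_pos : ∀ r ∈ Set.Ico (0:ℝ) 1, 0 < hat ω r)
    (h : ∃ C > 1, ∀ r ∈ Set.Ico (0:ℝ) 1, hat ω r ≤ C * hat ω ((1 + r) / 2)) :
    ∃ C' > 0, ∃ η > 0, ∀ x y : ℝ, 0 < x → x ≤ y →
      moment ω x ≤ C' * (y / x) ^ η * moment ω y := by
  obtain ⟨C, hC, hd⟩ := h
  have hC0 : (0:ℝ) < C := lt_trans one_pos hC
  set ν : ℝ → ℝ := fun r => if 0 ≤ r ∧ r < 1 then ω r else 0 with hνdef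
  have hν0 : ∀ r, 0 ≤ ν r := by
    intro r
    simp only [hνdef]
    split_ifs with hr
    · exact hω_nonneg r (Set.mem_Ico.mpr hr)
    · exact le_rfl
  have hone : ∀ᵐ r : ℝ, r ≠ (1:ℝ) := by
    rw [ae_iff]
    simp only [not_not, Set.setOf_eq_eq_singleton]
    exact Real.volume_singleton
  have hat_eq : ∀ a : ℝ, 0 ≤ a → a ≤ 1 → hat ν a = hat ω a := by
    intro a ha0 ha1
    apply intervalIntegral.integral_congr_ae
    filter_upwards [hone] with r hr hmem
    rw [Set.uIoc_of_le ha1] at hmem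
    have h1 : 0 ≤ r := le_trans ha0 hmem.1.le
    have h2 : r < 1 := lt_of_le_of_ne hmem.2 hr
    simp only [hνdef]
    rw [if_pos ⟨h1, h2⟩]
  have moment_eq : ∀ z : ℝ, moment ν z = moment ω z := by
    intro z
    apply intervalIntegral.integral_congr_ae
    filter_upwards [hone] with r hr hmem
    rw [Set.uIoc_of_le zero_le_one] at hmem
    have h1 : 0 ≤ r := hmem.1.le
    have h2 : r < 1 := lt_of_le_of_ne hmem.2 hr
    simp only [hνdef]
    rw [if_pos ⟨h1, h2⟩]
  have hνi : IntervalIntegrable ν volume 0 1 := by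
    have hae : ν =ᵐ[volume.restrict (Set.Ioc (0:ℝ) 1)] ω := by
      have hsub : ∀ᵐ r ∂(volume.restrict (Set.Ioc (0:ℝ) 1)), r ∈ Set.Ioc (0:ℝ) 1 :=
        ae_restrict_mem measurableSet_Ioc
      have h1 : ∀ᵐ r ∂(volume.restrict (Set.Ioc (0:ℝ) 1)), r ≠ (1:ℝ) :=
        hone.filter_mono (MeasureTheory.ae_mono Measure.restrict_le_self)
      filter_upwards [hsub, h1] with r hr hne
      simp only [hνdef]
      rw [if_pos ⟨hr.1.le, lt_of_le_of_ne hr.2 hne⟩]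
    rw [intervalIntegrable_iff, Set.uIoc_of_le zero_le_one] at hω_int ⊢
    exact hω_int.congr hae.symm
  have hdν : ∀ r ∈ Set.Ico (0:ℝ) 1, hat ν r ≤ C * hat ν ((1 + r) / 2) := by
    intro r hr
    rcases Set.mem_Ico.mp hr with ⟨hr0, hr1⟩
    have hm : (0:ℝ) ≤ (1 + r) / 2 := by linarith
    have hm1 : (1 + r) / 2 < 1 := by linarith
    rw [hat_eq r hr0 hr1.le, hat_eq _ hm hm1.le]
    exact hd r hr
  -- constants
  set K0 : ℕ := ⌈2 * Real.log C + 2⌉₊ with hK0def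
  have hK0 : 2 * Real.log C + 2 ≤ (K0:ℝ) := Nat.le_ceil _
  set S : ℝ := 2 * C ^ K0 + 1 with hSdef
  have hS0 : 0 < S := by
    have := pow_pos hC0 K0
    rw [hSdef]; linarith
  have hS1 : 1 ≤ S := by
    have := pow_pos hC0 K0
    rw [hSdef]; linarith
  set η : ℕ := ⌈Real.logb 2 C⌉₊ + 1 with hηdef
  have hη : 0 < η := Nat.succ_pos _
  have hC2η : C ≤ (2:ℝ) ^ η := by
    have h1 : Real.logb 2 C ≤ (η:ℝ) := by
      have h0 := Nat.le_ceil (Real.logb 2 C)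
      have h2 : ((⌈Real.logb 2 C⌉₊ : ℝ)) ≤ (η:ℝ) := by
        rw [hηdef]; push_cast; linarith
      linarith
    calc C = (2:ℝ) ^ Real.logb 2 C := (Real.rpow_logb (by norm_num) (by norm_num) hC0).symm
      _ ≤ (2:ℝ) ^ ((η:ℕ):ℝ) := Real.rpow_le_rpow_of_exponent_le (by norm_num) h1
      _ = (2:ℝ) ^ (η:ℕ) := Real.rpow_natCast 2 η
  refine ⟨8 * S * (4:ℝ) ^ η, by positivity, η, hη, ?_⟩
  intro x y hx hxy
  have hy : 0 < y := lt_of_lt_of_le hx hxy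
  -- choose dyadic scales
  have hscale : ∀ z : ℝ, 1 ≤ z →
      (2:ℝ) ^ (Nat.log 2 ⌊z⌋₊) ≤ z ∧ z < (2:ℝ) ^ (Nat.log 2 ⌊z⌋₊ + 1) := by
    intro z hz
    have hz0 : (0:ℝ) ≤ z := by linarith
    have hfl : 1 ≤ ⌊z⌋₊ := Nat.le_floor (by exact_mod_cast hz)
    constructor
    · calc ((2:ℝ) ^ (Nat.log 2 ⌊z⌋₊)) = ((2 ^ (Nat.log 2 ⌊z⌋₊) : ℕ) : ℝ) := by push_cast; ring
        _ ≤ (⌊z⌋₊ : ℝ) := by exact_mod_cast Nat.pow_log_le_self 2 (by omega)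
        _ ≤ z := Nat.floor_le hz0
    · have h1 : ⌊z⌋₊ < 2 ^ (Nat.log 2 ⌊z⌋₊ + 1) := Nat.lt_pow_succ_log_self (by norm_num) _
      have h2 : z < (⌊z⌋₊ : ℝ) + 1 := Nat.lt_floor_add_one z
      have h3 : ((⌊z⌋₊ : ℝ)) + 1 ≤ ((2 ^ (Nat.log 2 ⌊z⌋₊ + 1) : ℕ) : ℝ) := by exact_mod_cast h1
      push_cast at h3
      linarith
  obtain ⟨m, M, hmM, hM1, hyM, hmx, hratio⟩ :
      ∃ m M : ℕ, m ≤ M ∧ 1 ≤ M ∧ y ≤ (2:ℝ) ^ M ∧ ((2:ℝ) ^ m ≤ x ∨ m = 0) ∧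
        (2:ℝ) ^ (M - m) ≤ 4 * (y / x) := by
    have h4 : 4 * (y / x) = 4 * y / x := by ring
    rcases le_or_gt 1 x with hx1 | hx1
    · obtain ⟨hxl, hxu⟩ := hscale x hx1
      obtain ⟨hyl, hyu⟩ := hscale y (le_trans hx1 hxy)
      set m := Nat.log 2 ⌊x⌋₊ with hmdef
      set M := Nat.log 2 ⌊y⌋₊ + 1 with hMdef
      have hyM : y ≤ (2:ℝ) ^ M := hyu.le
      have hM2y : (2:ℝ) ^ M ≤ 2 * y := by rw [pow_succ]; linarith
      have hmM : m ≤ M := by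
        by_contra hcon
        push_neg at hcon
        have : (2:ℝ) ^ M ≤ (2:ℝ) ^ m := pow_le_pow_right₀ (by norm_num) (by omega)
        linarith
      refine ⟨m, M, hmM, by omega, hyM, Or.inl hxl, ?_⟩
      have hpowmm : (2:ℝ) ^ (M - m) * 2 ^ m = 2 ^ M := by
        rw [← pow_add]; congr 1; omega
      have hx2 : x < 2 * 2 ^ m := by rw [pow_succ] at hxu; linarith
      rw [h4, le_div_iff₀ hx]
      have h5 : (2:ℝ) ^ (M - m) * x ≤ (2:ℝ) ^ (M - m) * (2 * 2 ^ m) :=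
        mul_le_mul_of_nonneg_left hx2.le (by positivity)
      have h6 : (2:ℝ) ^ (M - m) * (2 * 2 ^ m) = 2 * 2 ^ M := by rw [← hpowmm]; ring
      linarith
    · rcases le_or_gt 1 y with hy1 | hy1
      · obtain ⟨hyl, hyu⟩ := hscale y hy1
        set M := Nat.log 2 ⌊y⌋₊ + 1 with hMdef
        have hM2y : (2:ℝ) ^ M ≤ 2 * y := by rw [pow_succ]; linarith
        refine ⟨0, M, Nat.zero_le _, by omega, hyu.le, Or.inr rfl, ?_⟩
        rw [Nat.sub_zero, h4, le_div_iff₀ hx]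
        have h5 : (2:ℝ) ^ M * x ≤ (2:ℝ) ^ M * 1 :=
          mul_le_mul_of_nonneg_left hx1.le (by positivity)
        linarith
      · refine ⟨0, 1, by omega, le_rfl, by norm_num; linarith, Or.inr rfl, ?_⟩
        rw [h4, le_div_iff₀ hx]
        norm_num
        linarith
  -- main chain
  have step1 : moment ν x ≤ S * hat ν (t m) := by
    rcases hmx with hmx | hmx
    · exact upper hC hν0 hνi hdν hK0 hmx
    · subst hmx
      have h1 := upper0 hν0 hνi hx
      have h2 : hat ν 0 ≤ S * hat ν (t 0) := by
        rw [t_zero]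
        exact le_mul_of_one_le_left (hat_nonneg hν0 zero_le_one) hS1
      rw [t_zero] at h2 ⊢
      linarith
  have step2 : hat ν (t m) ≤ C ^ (M - m) * hat ν (t M) := by
    have := hatA hC hdν (M - m) m
    rwa [show m + (M - m) = M by omega] at this
  have step3 : hat ν (t M) ≤ 8 * moment ν y := lower hν0 hνi hM1 hy hyM
  have hmy : 0 ≤ moment ν y := moment_nonneg hν0
  have hmom : moment ν x ≤ S * (C ^ (M - m) * (8 * moment ν y)) := by
    calc moment ν x ≤ S * hat ν (t m) := step1
      _ ≤ S * (C ^ (M - m) * hat ν (t M)) := mul_le_mul_of_nonneg_left step2 hS0.le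
      _ ≤ S * (C ^ (M - m) * (8 * moment ν y)) := by
          apply mul_le_mul_of_nonneg_left _ hS0.le
          exact mul_le_mul_of_nonneg_left step3 (by positivity)
  have hpowb : C ^ (M - m) ≤ (4:ℝ) ^ η * (y / x) ^ η := by
    calc C ^ (M - m) ≤ ((2:ℝ) ^ η) ^ (M - m) :=
          pow_le_pow_left₀ hC0.le hC2η (M - m)
      _ = ((2:ℝ) ^ (M - m)) ^ η := by rw [← pow_mul, ← pow_mul, Nat.mul_comm]
      _ ≤ (4 * (y / x)) ^ η := pow_le_pow_left₀ (by positivity) hratio η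
      _ = 4 ^ η * (y / x) ^ η := mul_pow 4 (y/x) η
  rw [← moment_eq x, ← moment_eq y]
  calc moment ν x ≤ S * (C ^ (M - m) * (8 * moment ν y)) := hmom
    _ ≤ S * (((4:ℝ) ^ η * (y / x) ^ η) * (8 * moment ν y)) := by
        apply mul_le_mul_of_nonneg_left _ hS0.le
        exact mul_le_mul_of_nonneg_right hpowb (mul_nonneg (by norm_num) hmy)
    _ = 8 * S * (4:ℝ) ^ η * (y / x) ^ η * moment ν y := by ring
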